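/- Let a_i and b_i (for i = 0, 1, ..., m+1) be nonnegative real sequences satisfying ∑_{i=0}^{k} a_i ≤ c·a_{k+1} + ∑_{i=0}^{k} b_i for a constant c > 0 and all k ≤ m. Then a_0 ≤ c·(c/(c+1))^k · a_{k+1} + ∑_{i=0}^{k} (c/(c+1))^i · b_i for all k ≤ m. -/

import Mathlib

theorem stmt_3 (m : ℕ) (c : ℝ) (hc : 0 < c) (a b : ℕ → ℝ)
    (ha : ∀ i, 0 ≤ a i) (hb : ∀ i, 0 ≤ b i)
    (hrec : ∀ k ≤ m, ∑ i ∈ Finset.range (k + 1), a i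
        ≤ c * a (k + 1) + ∑ i ∈ Finset.range (k + 1), b i) :
    ∀ k ≤ m, a 0 ≤ c * (c / (c + 1)) ^ k * a (k + 1)
        + ∑ i ∈ Finset.range (k + 1), (c / (c + 1)) ^ i * b i := by
  set r : ℝ := c / (c + 1) with hrdef
  have hc1 : (0:ℝ) < c + 1 := by linarith
  have hr0 : 0 ≤ r := by positivity
  have h1r : 1 / (c + 1) = 1 - r := by
    rw [hrdef]; field_simp; ring
  -- main inductive estimate
  have main : ∀ k ≤ m, a 0 ≤ r ^ k * (∑ i ∈ Finset.range (k + 1), a i)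
      + (1 / (c + 1)) * ∑ j ∈ Finset.range k,
          r ^ j * ∑ i ∈ Finset.range (j + 1), b i := by
    intro k
    induction k with
    | zero => intro _; simp
    | succ n ih =>
      intro hn
      have hnm : n ≤ m := by omega
      have h1 := ih hnm
      have h2 := hrec n hnm
      have hS : ∑ i ∈ Finset.range (n + 1), a i
          ≤ r * (∑ i ∈ Finset.range (n + 2), a i)
            + (1 / (c + 1)) * ∑ i ∈ Finset.range (n + 1), b i := by
        have hA : ∑ i ∈ Finset.range (n + 2), a i
            = ∑ i ∈ Finset.range (n + 1), a i + a (n + 1) :=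
          Finset.sum_range_succ a (n + 1)
        rw [hA, hrdef]
        rw [div_mul_eq_mul_div, one_div, ← div_eq_inv_mul, ← add_div,
          le_div_iff₀ hc1]
        nlinarith [h2]
      have h3 : r ^ n * (∑ i ∈ Finset.range (n + 1), a i)
          ≤ r ^ n * (r * (∑ i ∈ Finset.range (n + 2), a i)
            + (1 / (c + 1)) * ∑ i ∈ Finset.range (n + 1), b i) :=
        mul_le_mul_of_nonneg_left hS (pow_nonneg hr0 n)
      rw [Finset.sum_range_succ (f := fun j => r ^ j * ∑ i ∈ Finset.range (j + 1), b i)]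
      have : a 0 ≤ r ^ n * (r * (∑ i ∈ Finset.range (n + 2), a i)
            + (1 / (c + 1)) * ∑ i ∈ Finset.range (n + 1), b i)
          + (1 / (c + 1)) * ∑ j ∈ Finset.range n,
              r ^ j * ∑ i ∈ Finset.range (j + 1), b i := by linarith
      calc a 0 ≤ _ := this
        _ = r ^ (n + 1) * (∑ i ∈ Finset.range (n + 1 + 1), a i)
            + 1 / (c + 1) * (∑ j ∈ Finset.range n,
                r ^ j * ∑ i ∈ Finset.range (j + 1), b i
              + r ^ n * ∑ i ∈ Finset.range (n + 1), b i) := by ring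
  -- Abel summation identity
  have ident : ∀ k : ℕ, r ^ k * (∑ i ∈ Finset.range (k + 1), b i)
      + (1 - r) * ∑ j ∈ Finset.range k, r ^ j * ∑ i ∈ Finset.range (j + 1), b i
      = ∑ i ∈ Finset.range (k + 1), r ^ i * b i := by
    intro k
    induction k with
    | zero => simp
    | succ n ih =>
      rw [Finset.sum_range_succ (f := fun j => r ^ j * ∑ i ∈ Finset.range (j + 1), b i),
        Finset.sum_range_succ (f := fun i => r ^ i * b i),
        Finset.sum_range_succ b (n + 1), ← ih]
      ring
  intro k hk
  have h1 := main k hk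
  have h2 := hrec k hk
  have h3 : r ^ k * (∑ i ∈ Finset.range (k + 1), a i)
      ≤ r ^ k * (c * a (k + 1) + ∑ i ∈ Finset.range (k + 1), b i) :=
    mul_le_mul_of_nonneg_left h2 (pow_nonneg hr0 k)
  have h4 := ident k
  rw [h1r] at h1
  nlinarith [h4, h3, h1]
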